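/- For the multi-species Euler scheme with charges q_i ∈ {+1, −1} (or general reals), if A_j = −h²∑_{s=1}^j ∑_{i=1}^m q_i c_s^{i,n} − hσ_a where all c_s^{i,n} ≥ 0 and the masses C^± = h∑_{{i : ±q_i>0}}∑_{j=1}^N q_i c_j^{i,0} are conserved, then under the compatibility condition σ_a + σ_b = −(C^+ + C^−) one has h(C^− + σ_b) ≤ A_j ≤ −h(C^− + σ_a) for all j. -/

import Mathlib

/-- Bounds on A_j for the multi-species scheme under mass conservation and compatibility. -/
theorem multispecies_A_bounds
    (N m : ℕ) (hN : 1 ≤ N) (hm : 1 ≤ m) (h : ℝ) (hh : 0 < h)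
    (σa σb : ℝ) (q : ℕ → ℝ) (cn c0 : ℕ → ℕ → ℝ) (A : ℕ → ℝ)
    (Cp Cm : ℝ)
    (hcn : ∀ i ∈ Finset.Icc 1 m, ∀ j ∈ Finset.Icc 1 N, 0 ≤ cn i j)
    (hmass : ∀ i ∈ Finset.Icc 1 m,
      h * ∑ j ∈ Finset.Icc 1 N, q i * cn i j
        = h * ∑ j ∈ Finset.Icc 1 N, q i * c0 i j)
    (hCp : Cp = h * ∑ i ∈ (Finset.Icc 1 m).filter (fun i => 0 < q i),
        ∑ j ∈ Finset.Icc 1 N, q i * c0 i j)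
    (hCm : Cm = h * ∑ i ∈ (Finset.Icc 1 m).filter (fun i => q i < 0),
        ∑ j ∈ Finset.Icc 1 N, q i * c0 i j)
    (hA : ∀ j ≤ N, A j = -h ^ 2 * ∑ s ∈ Finset.Icc 1 j,
        ∑ i ∈ Finset.Icc 1 m, q i * cn i s - h * σa)
    (hcompat : σa + σb = -(Cp + Cm)) :
    ∀ j ≤ N, h * (Cm + σb) ≤ A j ∧ A j ≤ -h * (Cm + σa) := by
  intro j hj
  have hmass' : ∀ i ∈ Finset.Icc 1 m,
      ∑ s ∈ Finset.Icc 1 N, q i * cn i s = ∑ s ∈ Finset.Icc 1 N, q i * c0 i s := by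
    intro i hi
    exact mul_left_cancel₀ hh.ne' (hmass i hi)
  set f : ℕ → ℝ := fun i => ∑ s ∈ Finset.Icc 1 j, q i * cn i s with hf
  set g : ℕ → ℝ := fun i => ∑ s ∈ Finset.Icc 1 N, q i * cn i s with hg
  have hsub : Finset.Icc 1 j ⊆ Finset.Icc 1 N := Finset.Icc_subset_Icc le_rfl hj
  -- rewrite Cp, Cm using cn
  have hCp' : Cp = h * ∑ i ∈ (Finset.Icc 1 m).filter (fun i => 0 < q i), g i := by
    rw [hCp]
    congr 1
    exact (Finset.sum_congr rfl (fun i hi =>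
      hmass' i (Finset.mem_of_mem_filter i hi))).symm
  have hCm' : Cm = h * ∑ i ∈ (Finset.Icc 1 m).filter (fun i => q i < 0), g i := by
    rw [hCm]
    congr 1
    exact (Finset.sum_congr rfl (fun i hi =>
      hmass' i (Finset.mem_of_mem_filter i hi))).symm
  -- swap order of summation
  have hT : (∑ s ∈ Finset.Icc 1 j, ∑ i ∈ Finset.Icc 1 m, q i * cn i s)
      = ∑ i ∈ Finset.Icc 1 m, f i := Finset.sum_comm
  -- pointwise facts
  have hf_nonneg : ∀ i ∈ Finset.Icc 1 m, 0 ≤ q i → 0 ≤ f i := by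
    intro i hi hq
    exact Finset.sum_nonneg fun s hs => mul_nonneg hq (hcn i hi s (hsub hs))
  have hf_nonpos : ∀ i ∈ Finset.Icc 1 m, q i ≤ 0 → f i ≤ 0 := by
    intro i hi hq
    exact Finset.sum_nonpos fun s hs =>
      mul_nonpos_of_nonpos_of_nonneg hq (hcn i hi s (hsub hs))
  have hfg_le : ∀ i ∈ Finset.Icc 1 m, 0 ≤ q i → f i ≤ g i := by
    intro i hi hq
    exact Finset.sum_le_sum_of_subset_of_nonneg hsub
      (fun s hs _ => mul_nonneg hq (hcn i hi s hs))
  have hgf_le : ∀ i ∈ Finset.Icc 1 m, q i ≤ 0 → g i ≤ f i := by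
    intro i hi hq
    have : (∑ s ∈ Finset.Icc 1 j, -(q i * cn i s))
        ≤ ∑ s ∈ Finset.Icc 1 N, -(q i * cn i s) :=
      Finset.sum_le_sum_of_subset_of_nonneg hsub
        (fun s hs _ => neg_nonneg.mpr
          (mul_nonpos_of_nonpos_of_nonneg hq (hcn i hi s hs)))
    simpa [Finset.sum_neg_distrib, hf, hg] using neg_le_neg this
  -- upper bound on total: ∑ f ≤ ∑_{pos} g
  have hupper : (∑ i ∈ Finset.Icc 1 m, f i)
      ≤ ∑ i ∈ (Finset.Icc 1 m).filter (fun i => 0 < q i), g i := by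
    rw [← Finset.sum_filter_add_sum_filter_not (Finset.Icc 1 m) (fun i => 0 < q i) f]
    have h1 : (∑ i ∈ (Finset.Icc 1 m).filter (fun i => 0 < q i), f i)
        ≤ ∑ i ∈ (Finset.Icc 1 m).filter (fun i => 0 < q i), g i := by
      refine Finset.sum_le_sum fun i hi => ?_
      have hi' := Finset.mem_filter.mp hi
      exact hfg_le i hi'.1 (le_of_lt hi'.2)
    have h2 : (∑ i ∈ (Finset.Icc 1 m).filter (fun i => ¬ 0 < q i), f i) ≤ 0 := by
      refine Finset.sum_nonpos fun i hi => ?_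
      have hi' := Finset.mem_filter.mp hi
      exact hf_nonpos i hi'.1 (le_of_not_gt hi'.2)
    linarith
  -- lower bound on total: ∑_{neg} g ≤ ∑ f
  have hlower : (∑ i ∈ (Finset.Icc 1 m).filter (fun i => q i < 0), g i)
      ≤ ∑ i ∈ Finset.Icc 1 m, f i := by
    rw [← Finset.sum_filter_add_sum_filter_not (Finset.Icc 1 m) (fun i => q i < 0) f]
    have h1 : (∑ i ∈ (Finset.Icc 1 m).filter (fun i => q i < 0), g i)
        ≤ ∑ i ∈ (Finset.Icc 1 m).filter (fun i => q i < 0), f i := by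
      refine Finset.sum_le_sum fun i hi => ?_
      have hi' := Finset.mem_filter.mp hi
      exact hgf_le i hi'.1 (le_of_lt hi'.2)
    have h2 : 0 ≤ ∑ i ∈ (Finset.Icc 1 m).filter (fun i => ¬ q i < 0), f i := by
      refine Finset.sum_nonneg fun i hi => ?_
      have hi' := Finset.mem_filter.mp hi
      exact hf_nonneg i hi'.1 (le_of_not_gt hi'.2)
    linarith
  have hAj := hA j hj
  rw [hAj, hT]
  set T := ∑ i ∈ Finset.Icc 1 m, f i with hTdef
  set P := ∑ i ∈ (Finset.Icc 1 m).filter (fun i => 0 < q i), g i with hP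
  set M := ∑ i ∈ (Finset.Icc 1 m).filter (fun i => q i < 0), g i with hM
  constructor
  · -- h * (Cm + σb) ≤ -h^2 * T - h * σa, using σb = -(Cp+Cm)-σa, Cp = h*P, T ≤ P
    have : h * T ≤ h * P := mul_le_mul_of_nonneg_left hupper hh.le
    nlinarith [this, hh]
  · have : h * M ≤ h * T := mul_le_mul_of_nonneg_left hlower hh.le
    nlinarith [this, hh]
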